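/- (Optimal sum-of-MSE policy.) Define ã*_k = h_k·√P / (σ² + P·∑_{j=1}^K h_j²) and b̃*_k = √P for all k ∈ {1,…,K}. Then b̃* is feasible and for every ã ∈ ℝ^K and every feasible b̃, ∑_{k=1}^K MSE_k(ã*, b̃*) ≤ ∑_{k=1}^K MSE_k(ã, b̃). -/

import Mathlib

open Finset

/-- Feasibility of the Tx-scaling factors: `0 ≤ b_k ≤ √P` for all `1 ≤ k ≤ K`. -/
def feasible (K : ℕ) (P : ℝ) (b : ℕ → ℝ) : Prop :=
  ∀ k, 1 ≤ k → k ≤ K → 0 ≤ b k ∧ b k ≤ Real.sqrt P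

/-- The estimation MSE of sensor `k` in the MAC system:
`MSE_k(ã, b̃) = (ã_k h_k b̃_k - 1)² + ã_k² ∑_{j≠k} (h_j b̃_j)² + ã_k² σ²`. -/
noncomputable def msek (K : ℕ) (h : ℕ → ℝ) (σ : ℝ) (a b : ℕ → ℝ) (k : ℕ) : ℝ :=
  (a k * h k * b k - 1) ^ 2 +
    (a k) ^ 2 * (∑ j ∈ (Finset.Icc 1 K).erase k, (h j * b j) ^ 2) +
    (a k) ^ 2 * σ ^ 2

lemma quad_lb (ak d c : ℝ) (hc : 0 < c) :
    1 - d ^ 2 / (d ^ 2 + c) ≤ (ak * d - 1) ^ 2 + ak ^ 2 * c := by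
  have hdc : 0 < d ^ 2 + c := by positivity
  have h1 : 1 - d ^ 2 / (d ^ 2 + c) = c / (d ^ 2 + c) := by field_simp; ring
  rw [h1, div_le_iff₀ hdc]
  nlinarith [sq_nonneg ((d ^ 2 + c) * ak - d)]

lemma quad_eq (d c : ℝ) (hc : 0 < c) :
    (d / (d ^ 2 + c) * d - 1) ^ 2 + (d / (d ^ 2 + c)) ^ 2 * c
      = 1 - d ^ 2 / (d ^ 2 + c) := by
  have hdc : (d ^ 2 + c) ≠ 0 := by positivity
  field_simp
  ring

theorem stmt_10 (K : ℕ) (hK : 1 ≤ K) (h : ℕ → ℝ) (P σ : ℝ) (hP : 0 < P) (hσ : 0 < σ)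
    (hpos : ∀ k, 1 ≤ k → k ≤ K → 0 < h k)
    (astar bstar : ℕ → ℝ)
    (hastar : ∀ k, astar k =
      h k * Real.sqrt P / (σ ^ 2 + P * ∑ j ∈ Finset.Icc 1 K, (h j) ^ 2))
    (hbstar : ∀ k, bstar k = Real.sqrt P) :
    feasible K P bstar ∧
    ∀ a b : ℕ → ℝ, feasible K P b →
      ∑ k ∈ Finset.Icc 1 K, msek K h σ astar bstar k ≤
        ∑ k ∈ Finset.Icc 1 K, msek K h σ a b k := by
  have hsqP : Real.sqrt P ^ 2 = P := Real.sq_sqrt hP.le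
  have hσ2 : 0 < σ ^ 2 := by positivity
  refine ⟨fun k _ _ => ⟨by rw [hbstar]; exact Real.sqrt_nonneg P, le_of_eq (hbstar k)⟩, ?_⟩
  intro a b hb
  set Tm : ℝ := P * ∑ j ∈ Finset.Icc 1 K, (h j) ^ 2 with hTmdef
  set T : ℝ := ∑ j ∈ Finset.Icc 1 K, (h j * b j) ^ 2 with hTdef
  have hT0 : 0 ≤ T := Finset.sum_nonneg fun j _ => sq_nonneg _
  have hTm0 : 0 ≤ Tm := le_trans hT0 (by
    rw [hTmdef, Finset.mul_sum]
    apply Finset.sum_le_sum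
    intro j hj
    obtain ⟨hb0, hbP⟩ := hb j (Finset.mem_Icc.mp hj).1 (Finset.mem_Icc.mp hj).2
    have hbj : b j ^ 2 ≤ P := by nlinarith
    nlinarith [sq_nonneg (h j)])
  have hTle : T ≤ Tm := by
    rw [hTmdef, Finset.mul_sum]
    apply Finset.sum_le_sum
    intro j hj
    obtain ⟨hb0, hbP⟩ := hb j (Finset.mem_Icc.mp hj).1 (Finset.mem_Icc.mp hj).2
    have hbj : b j ^ 2 ≤ P := by nlinarith
    nlinarith [sq_nonneg (h j)]
  -- upper value: sum at (astar, bstar)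
  have key2 : ∀ k ∈ Finset.Icc 1 K,
      msek K h σ astar bstar k = 1 - (h k * Real.sqrt P) ^ 2 / (Tm + σ ^ 2) := by
    intro k hk
    have hS : (∑ j ∈ (Finset.Icc 1 K).erase k, (h j * bstar j) ^ 2)
        + (h k * Real.sqrt P) ^ 2 = Tm := by
      have h1 := Finset.sum_erase_add (Finset.Icc 1 K)
        (fun j => (h j * bstar j) ^ 2) hk
      simp only [hbstar] at h1 ⊢
      rw [h1, hTmdef, Finset.mul_sum]
      exact Finset.sum_congr rfl fun j _ => by nlinarith
    set d := h k * Real.sqrt P with hd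
    set S := ∑ j ∈ (Finset.Icc 1 K).erase k, (h j * bstar j) ^ 2 with hSdef
    have hS0 : 0 ≤ S := Finset.sum_nonneg fun j _ => sq_nonneg _
    have hc : 0 < S + σ ^ 2 := by positivity
    have hA : astar k = d / (d ^ 2 + (S + σ ^ 2)) := by
      rw [hastar k, hd]
      congr 1
      rw [← hS, hd]
      ring
    have := quad_eq d (S + σ ^ 2) hc
    unfold msek
    rw [hbstar k, hA, ← hSdef]
    have hd2 : d ^ 2 + (S + σ ^ 2) = Tm + σ ^ 2 := by rw [← hS]; ring
    calc (d / (d ^ 2 + (S + σ ^ 2)) * h k * Real.sqrt P - 1) ^ 2 +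
          (d / (d ^ 2 + (S + σ ^ 2))) ^ 2 * S +
          (d / (d ^ 2 + (S + σ ^ 2))) ^ 2 * σ ^ 2
        = (d / (d ^ 2 + (S + σ ^ 2)) * d - 1) ^ 2 +
          (d / (d ^ 2 + (S + σ ^ 2))) ^ 2 * (S + σ ^ 2) := by rw [hd]; ring
      _ = 1 - d ^ 2 / (d ^ 2 + (S + σ ^ 2)) := this
      _ = 1 - d ^ 2 / (Tm + σ ^ 2) := by rw [hd2]
  -- lower bound: sum at (a, b)
  have key1 : ∀ k ∈ Finset.Icc 1 K,
      1 - (h k * b k) ^ 2 / (T + σ ^ 2) ≤ msek K h σ a b k := by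
    intro k hk
    have hS : (∑ j ∈ (Finset.Icc 1 K).erase k, (h j * b j) ^ 2)
        + (h k * b k) ^ 2 = T :=
      Finset.sum_erase_add (Finset.Icc 1 K) (fun j => (h j * b j) ^ 2) hk
    set d := h k * b k with hd
    set S := ∑ j ∈ (Finset.Icc 1 K).erase k, (h j * b j) ^ 2 with hSdef
    have hS0 : 0 ≤ S := Finset.sum_nonneg fun j _ => sq_nonneg _
    have hc : 0 < S + σ ^ 2 := by positivity
    have hd2 : d ^ 2 + (S + σ ^ 2) = T + σ ^ 2 := by rw [← hS]; ring
    have := quad_lb (a k) d (S + σ ^ 2) hc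
    rw [hd2] at this
    unfold msek
    calc 1 - d ^ 2 / (T + σ ^ 2)
        ≤ (a k * d - 1) ^ 2 + (a k) ^ 2 * (S + σ ^ 2) := this
      _ = (a k * h k * b k - 1) ^ 2 + (a k) ^ 2 * S + (a k) ^ 2 * σ ^ 2 := by
          rw [hd]; ring
  -- combine
  have card : ((Finset.Icc 1 K).card : ℝ) = (K : ℝ) := by
    rw [Nat.card_Icc]; simp
  have sum2 : ∑ k ∈ Finset.Icc 1 K, msek K h σ astar bstar k
      = (K : ℝ) - Tm / (Tm + σ ^ 2) := by
    rw [Finset.sum_congr rfl key2, Finset.sum_sub_distrib, ← Finset.sum_div]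
    have : ∑ k ∈ Finset.Icc 1 K, (h k * Real.sqrt P) ^ 2 = Tm := by
      rw [hTmdef, Finset.mul_sum]
      apply Finset.sum_congr rfl
      intro j _; nlinarith
    rw [this]
    simp [card]
  have sum1 : (K : ℝ) - T / (T + σ ^ 2)
      ≤ ∑ k ∈ Finset.Icc 1 K, msek K h σ a b k := by
    calc (K : ℝ) - T / (T + σ ^ 2)
        = ∑ k ∈ Finset.Icc 1 K, (1 - (h k * b k) ^ 2 / (T + σ ^ 2)) := by
          rw [Finset.sum_sub_distrib, ← Finset.sum_div, ← hTdef]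
          simp [card]
      _ ≤ _ := Finset.sum_le_sum key1
  rw [sum2]
  refine le_trans ?_ sum1
  have hTp : 0 < T + σ ^ 2 := by positivity
  have hTmp : 0 < Tm + σ ^ 2 := by positivity
  have : T / (T + σ ^ 2) ≤ Tm / (Tm + σ ^ 2) := by
    rw [div_le_div_iff₀ hTp hTmp]; nlinarith
  linarith
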